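/- arXiv:1011.4328 — 2 statements merged into one kernel-verified Lean document; each statement's English description precedes it below -/
import Mathlib

section
/- Define M(ε,α) = ε(1+α²) + (1−ε)[2(1+α²)Φ(−α) − 2αφ(α)] for ε ∈ (0,1) and α ≥ 0. Then for any probability measure p₀ on ℝ with p₀({0}) ≥ 1−ε, and X₀ ∼ p₀, Z ∼ N(0,1) independent: E[(η(X₀ + σZ; ασ) − X₀)²] ≤ M(ε,α)·σ² for every σ > 0. -/
open MeasureTheory ProbabilityTheory

open Real Set Filter

/-- Soft thresholding function η(y;θ) = sign(y)·max(|y|−θ, 0). -/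
noncomputable def softThr (y θ : ℝ) : ℝ := Real.sign y * max (|y| - θ) 0

/-- Standard Gaussian density φ. -/
noncomputable def stdGaussPDF (z : ℝ) : ℝ := Real.exp (-z^2/2) / Real.sqrt (2*Real.pi)

/-- Standard Gaussian CDF Φ. -/
noncomputable def stdGaussCDF (z : ℝ) : ℝ := ∫ u in Set.Iic z, stdGaussPDF u

noncomputable def clampTh (θ y : ℝ) : ℝ := max (-θ) (min y θ)

lemma softThr_eq {θ : ℝ} (hθ : 0 ≤ θ) (y : ℝ) : softThr y θ = y - clampTh θ y := by
  unfold softThr clampTh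
  rcases lt_trichotomy y 0 with hy | hy | hy
  · rw [Real.sign_of_neg hy, abs_of_neg hy]
    rw [min_eq_left (by linarith)]
    rcases le_or_gt (-θ) y with h | h
    · rw [max_eq_right (by linarith : -y - θ ≤ (0:ℝ)), max_eq_right h]; ring
    · rw [max_eq_left (by linarith : (0:ℝ) ≤ -y - θ), max_eq_left h.le]; ring
  · rw [hy, Real.sign_zero, min_eq_left hθ, max_eq_right (neg_nonpos.mpr hθ)]; ring
  · rw [Real.sign_of_pos hy, abs_of_pos hy]
    rcases le_or_gt θ y with h | h
    · rw [min_eq_right h, max_eq_right (by linarith : -θ ≤ θ),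
        max_eq_left (by linarith : (0:ℝ) ≤ y - θ)]; ring
    · rw [min_eq_left h.le, max_eq_right (by linarith : -θ ≤ y),
        max_eq_right (by linarith : y - θ ≤ (0:ℝ))]; ring

lemma clampTh_mono (θ : ℝ) : Monotone (clampTh θ) :=
  monotone_const.max ((monotone_id.min monotone_const))

lemma abs_clampTh_le {θ : ℝ} (hθ : 0 ≤ θ) (y : ℝ) : |clampTh θ y| ≤ θ := by
  rw [abs_le]; unfold clampTh
  constructor
  · exact le_max_left _ _
  · exact max_le (by linarith) (min_le_right _ _)

lemma continuous_clampTh (θ : ℝ) : Continuous (clampTh θ) :=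
  continuous_const.max (continuous_id.min continuous_const)

lemma softThr_smul {σ α : ℝ} (hσ : 0 < σ) (hα : 0 ≤ α) (z : ℝ) :
    softThr (σ * z) (α * σ) = σ * softThr z α := by
  rw [softThr_eq (by positivity), softThr_eq hα]
  unfold clampTh
  have h : σ * max (-α) (min z α) = max (-(α*σ)) (min (σ*z) (α*σ)) := by
    rw [mul_max_of_nonneg _ _ hσ.le, mul_min_of_nonneg _ _ hσ.le]; ring_nf
  linarith


lemma gaussianPDFReal_eq_std (z : ℝ) : gaussianPDFReal 0 1 z = stdGaussPDF z := by
  unfold gaussianPDFReal stdGaussPDF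
  simp [div_eq_inv_mul]

lemma stdGaussPDF_eq (z : ℝ) :
    stdGaussPDF z = (Real.sqrt (2*Real.pi))⁻¹ * Real.exp (-(1/2) * z^2) := by
  unfold stdGaussPDF; rw [div_eq_inv_mul]; ring_nf

lemma stdGaussPDF_nonneg (z : ℝ) : 0 ≤ stdGaussPDF z := by
  unfold stdGaussPDF; positivity

lemma stdGaussPDF_even (z : ℝ) : stdGaussPDF (-z) = stdGaussPDF z := by
  unfold stdGaussPDF; rw [neg_sq]

lemma continuous_stdGaussPDF : Continuous stdGaussPDF := by
  unfold stdGaussPDF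
  exact (Real.continuous_exp.comp (by continuity)).div_const _

lemma integrable_stdGaussPDF : Integrable stdGaussPDF := by
  have : stdGaussPDF = fun z => (Real.sqrt (2*Real.pi))⁻¹ * Real.exp (-(1/2) * z^2) :=
    funext stdGaussPDF_eq
  rw [this]
  exact (integrable_exp_neg_mul_sq (by norm_num : (0:ℝ) < 1/2)).const_mul _

lemma integral_stdGaussPDF : ∫ z, stdGaussPDF z = 1 := by
  have := integral_gaussianPDFReal_eq_one 0 (one_ne_zero)
  rw [show (fun z => stdGaussPDF z) = gaussianPDFReal 0 1 from
    funext fun z => (gaussianPDFReal_eq_std z).symm]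
  simpa using this

lemma integral_gaussianReal_eq (f : ℝ → ℝ) :
    ∫ z, f z ∂(gaussianReal 0 1) = ∫ z, stdGaussPDF z * f z := by
  have h1 : gaussianReal 0 1
      = (volume : Measure ℝ).withDensity
          (fun z => ((Real.toNNReal (gaussianPDFReal 0 1 z) : NNReal) : ENNReal)) := by
    rw [gaussianReal_of_var_ne_zero 0 one_ne_zero]
    congr 1
  rw [h1, integral_withDensity_eq_integral_smul
    ((measurable_gaussianPDFReal 0 1).real_toNNReal) f]
  congr 1; funext z
  rw [NNReal.smul_def, smul_eq_mul, Real.coe_toNNReal _ (gaussianPDFReal_nonneg 0 1 z),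
    gaussianPDFReal_eq_std]






lemma integrable_id_mul_stdGaussPDF : Integrable (fun z => z * stdGaussPDF z) := by
  have h : (fun z => z * stdGaussPDF z)
      = fun z => (Real.sqrt (2*Real.pi))⁻¹ * (z * Real.exp (-(1/2) * z^2)) := by
    funext z; rw [stdGaussPDF_eq]; ring
  rw [h]
  exact (integrable_mul_exp_neg_mul_sq (by norm_num : (0:ℝ) < 1/2)).const_mul _

lemma sq_mul_exp_le (z : ℝ) : z^2 * Real.exp (-(1/2) * z^2) ≤ 4 * Real.exp (-(1/4) * z^2) := by
  have h1 : z^2/4 ≤ Real.exp (z^2/4) := by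
    have := Real.add_one_le_exp (z^2/4); linarith
  have h2 : Real.exp (-(1/2) * z^2) = Real.exp (-(1/4) * z^2) * Real.exp (-(1/4)*z^2) := by
    rw [← Real.exp_add]; ring_nf
  have h3 : Real.exp (-(1/4)*z^2) * Real.exp (z^2/4) = 1 := by
    rw [← Real.exp_add]; ring_nf; exact Real.exp_zero
  have h4 : z^2 * Real.exp (-(1/4)*z^2) ≤ 4 := by
    calc z^2 * Real.exp (-(1/4)*z^2) ≤ (4 * Real.exp (z^2/4)) * Real.exp (-(1/4)*z^2) := by
          apply mul_le_mul_of_nonneg_right (by linarith) (Real.exp_nonneg _)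
      _ = 4 := by rw [mul_assoc, mul_comm (Real.exp (z^2/4)), h3, mul_one]
  calc z^2 * Real.exp (-(1/2) * z^2) = (z^2 * Real.exp (-(1/4)*z^2)) * Real.exp (-(1/4)*z^2) := by
        rw [h2]; ring
    _ ≤ 4 * Real.exp (-(1/4) * z^2) :=
        mul_le_mul_of_nonneg_right h4 (Real.exp_nonneg _)

lemma integrable_sq_mul_stdGaussPDF : Integrable (fun z => z^2 * stdGaussPDF z) := by
  set c := (Real.sqrt (2*Real.pi))⁻¹ with hc
  have hc0 : 0 ≤ c := by positivity
  apply Integrable.mono' ((integrable_exp_neg_mul_sq (by norm_num : (0:ℝ) < 1/4)).const_mul (4*c))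
  · exact ((continuous_pow 2).mul continuous_stdGaussPDF).aestronglyMeasurable
  · filter_upwards with z
    rw [Real.norm_eq_abs, abs_of_nonneg (mul_nonneg (sq_nonneg z) (stdGaussPDF_nonneg z)),
      stdGaussPDF_eq]
    have := sq_mul_exp_le z
    calc z^2 * (c * Real.exp (-(1/2) * z^2)) = c * (z^2 * Real.exp (-(1/2) * z^2)) := by ring
      _ ≤ c * (4 * Real.exp (-(1/4) * z^2)) := by
          exact mul_le_mul_of_nonneg_left this hc0
      _ = 4 * c * Real.exp (-(1/4) * z^2) := by ring

lemma integral_comp_neg_real (f : ℝ → ℝ) : ∫ z, f (-z) = ∫ z, f z :=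
  (Measure.measurePreserving_neg (volume : Measure ℝ)).integral_comp
    (Homeomorph.neg ℝ).measurableEmbedding f

lemma integral_id_mul_stdGaussPDF : ∫ z, z * stdGaussPDF z = 0 := by
  have h := integral_comp_neg_real (fun z => z * stdGaussPDF z)
  simp only [stdGaussPDF_even, neg_mul] at h
  have h2 : ∫ z, -(z * stdGaussPDF z) = - ∫ z, z * stdGaussPDF z := integral_neg _
  linarith [h, h2, h2 ▸ h]

lemma setIntegral_Ioi_stdGaussPDF (a : ℝ) :
    ∫ z in Ioi a, stdGaussPDF z = stdGaussCDF (-a) := by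
  have h := integral_comp_neg_Iic (-a) stdGaussPDF
  simp only [stdGaussPDF_even, neg_neg] at h
  rw [stdGaussCDF, ← h]


lemma tendsto_exp_neg_mul_sq_atTop {b : ℝ} (hb : 0 < b) :
    Tendsto (fun z : ℝ => Real.exp (-b * z^2)) atTop (nhds 0) := by
  apply Real.tendsto_exp_atBot.comp
  have h1 : Tendsto (fun z : ℝ => b * z^2) atTop atTop :=
    (tendsto_pow_atTop two_ne_zero).const_mul_atTop hb
  have h2 := tendsto_neg_atBot_iff.mpr h1
  convert h2 using 2 with z
  ring


lemma hasDerivAt_stdGaussPDF (z : ℝ) : HasDerivAt stdGaussPDF (-z * stdGaussPDF z) z := by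
  have hg : HasDerivAt (fun t : ℝ => -t^2/2) (-z) z := by
    have h := (hasDerivAt_pow 2 z).neg.div_const 2
    exact h.congr_deriv (by norm_num; ring)
  have he := hg.exp.div_const (Real.sqrt (2*Real.pi))
  have hfe : (fun t => Real.exp (-t^2/2) / Real.sqrt (2*Real.pi)) = stdGaussPDF := rfl
  rw [hfe] at he
  exact he.congr_deriv (by unfold stdGaussPDF; ring)

lemma tendsto_stdGaussPDF_atTop : Tendsto stdGaussPDF atTop (nhds 0) := by
  have h := (tendsto_exp_neg_mul_sq_atTop (by norm_num : (0:ℝ) < 1/2)).div_const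
    (Real.sqrt (2*Real.pi))
  rw [zero_div] at h
  convert h using 2 with z
  unfold stdGaussPDF; ring_nf

lemma le_exp_quarter (z : ℝ) (hz : 0 ≤ z) : z ≤ 2 * Real.exp (z^2/4) := by
  have h := Real.add_one_le_exp (z^2/4)
  nlinarith [sq_nonneg (z - 2)]

lemma tendsto_id_mul_stdGaussPDF_atTop :
    Tendsto (fun z => z * stdGaussPDF z) atTop (nhds 0) := by
  set c := (Real.sqrt (2*Real.pi))⁻¹ with hc
  have hc0 : (0:ℝ) ≤ c := by positivity
  have hupper : Tendsto (fun z : ℝ => 2 * c * Real.exp (-(1/4) * z^2)) atTop (nhds 0) := by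
    have h := (tendsto_exp_neg_mul_sq_atTop (by norm_num : (0:ℝ) < 1/4)).const_mul (2*c)
    rwa [mul_zero] at h
  apply tendsto_of_tendsto_of_tendsto_of_le_of_le' tendsto_const_nhds hupper
  · filter_upwards [eventually_ge_atTop (0:ℝ)] with z hz
    have := Real.exp_nonneg (-z^2/2)
    have : 0 ≤ stdGaussPDF z := by unfold stdGaussPDF; positivity
    nlinarith
  · filter_upwards [eventually_ge_atTop (0:ℝ)] with z hz
    have h1 := le_exp_quarter z hz
    have h2 : Real.exp (-z^2/2) = Real.exp (-(1/4) * z^2) * Real.exp (-(1/4)*z^2) := by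
      rw [← Real.exp_add]; ring_nf
    have h3 : Real.exp (-(1/4)*z^2) * Real.exp (z^2/4) = 1 := by
      rw [← Real.exp_add]; ring_nf; exact Real.exp_zero
    have key : z * Real.exp (-(1/4)*z^2) ≤ 2 := by
      calc z * Real.exp (-(1/4)*z^2) ≤ (2 * Real.exp (z^2/4)) * Real.exp (-(1/4)*z^2) :=
            mul_le_mul_of_nonneg_right h1 (Real.exp_nonneg _)
        _ = 2 := by rw [mul_assoc, mul_comm (Real.exp (z^2/4)), h3, mul_one]
    have hpdf : stdGaussPDF z = c * Real.exp (-z^2/2) := by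
      unfold stdGaussPDF; rw [div_eq_inv_mul]
    rw [hpdf, h2]
    calc z * (c * (Real.exp (-(1/4) * z^2) * Real.exp (-(1/4)*z^2)))
        = c * (z * Real.exp (-(1/4)*z^2)) * Real.exp (-(1/4)*z^2) := by ring
      _ ≤ c * 2 * Real.exp (-(1/4)*z^2) := by
          apply mul_le_mul_of_nonneg_right _ (Real.exp_nonneg _)
          exact mul_le_mul_of_nonneg_left key hc0
      _ = 2 * c * Real.exp (-(1/4) * z^2) := by ring

lemma setIntegral_Ioi_id_mul_stdGaussPDF (a : ℝ) :
    ∫ z in Ioi a, z * stdGaussPDF z = stdGaussPDF a := by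
  have hd : ∀ x ∈ Ici a, HasDerivAt (fun t => -stdGaussPDF t) (x * stdGaussPDF x) x := by
    intro x _
    have h := (hasDerivAt_stdGaussPDF x).neg
    exact h.congr_deriv (by ring)
  have hlim : Tendsto (fun t => -stdGaussPDF t) atTop (nhds 0) := by
    have := tendsto_stdGaussPDF_atTop.neg
    rwa [neg_zero] at this
  have h := integral_Ioi_of_hasDerivAt_of_tendsto' hd
    integrable_id_mul_stdGaussPDF.integrableOn hlim
  rw [h]; ring

lemma setIntegral_Ioi_sq_sub_one_mul_stdGaussPDF (a : ℝ) :
    ∫ z in Ioi a, (z^2 - 1) * stdGaussPDF z = a * stdGaussPDF a := by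
  have hd : ∀ x ∈ Ici a, HasDerivAt (fun t => -t * stdGaussPDF t)
      ((x^2 - 1) * stdGaussPDF x) x := by
    intro x _
    have h := ((hasDerivAt_id x).neg.mul (hasDerivAt_stdGaussPDF x))
    exact h.congr_deriv (by simp [id]; ring)
  have hlim : Tendsto (fun t => -t * stdGaussPDF t) atTop (nhds 0) := by
    have h := tendsto_id_mul_stdGaussPDF_atTop.neg
    rw [neg_zero] at h
    apply h.congr
    intro t; ring
  have hint : IntegrableOn (fun z => (z^2 - 1) * stdGaussPDF z) (Ioi a) := by
    have h := (integrable_sq_mul_stdGaussPDF.sub integrable_stdGaussPDF).integrableOn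
      (s := Ioi a)
    apply h.congr_fun _ measurableSet_Ioi
    intro z _; simp [Pi.sub_apply]; ring
  have h := integral_Ioi_of_hasDerivAt_of_tendsto' hd hint hlim
  rw [h]; ring

lemma setIntegral_Ioi_sq_mul_stdGaussPDF (a : ℝ) :
    ∫ z in Ioi a, z^2 * stdGaussPDF z = a * stdGaussPDF a + stdGaussCDF (-a) := by
  have h1 : ∫ z in Ioi a, (z^2 - 1) * stdGaussPDF z
      = (∫ z in Ioi a, z^2 * stdGaussPDF z) - ∫ z in Ioi a, stdGaussPDF z := by
    rw [← integral_sub integrable_sq_mul_stdGaussPDF.integrableOn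
      integrable_stdGaussPDF.integrableOn]
    congr 1; funext z; ring
  have h2 := setIntegral_Ioi_sq_sub_one_mul_stdGaussPDF a
  rw [setIntegral_Ioi_stdGaussPDF a] at h1
  linarith

lemma stdGaussCDF_add_Ioi (a : ℝ) : stdGaussCDF a + stdGaussCDF (-a) = 1 := by
  have h := integral_add_compl measurableSet_Iic integrable_stdGaussPDF
    (s := Iic a)
  rw [compl_Iic] at h
  rw [stdGaussCDF, ← setIntegral_Ioi_stdGaussPDF a, h, integral_stdGaussPDF]

lemma integral_sq_mul_stdGaussPDF : ∫ z, z^2 * stdGaussPDF z = 1 := by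
  have hsplit := integral_add_compl measurableSet_Iic integrable_sq_mul_stdGaussPDF
    (s := Iic (0:ℝ))
  rw [compl_Iic] at hsplit
  have hsym : ∫ z in Iic (0:ℝ), z^2 * stdGaussPDF z
      = ∫ z in Ioi (0:ℝ), z^2 * stdGaussPDF z := by
    have h := integral_comp_neg_Iic (0:ℝ) (fun z => z^2 * stdGaussPDF z)
    rw [neg_zero] at h
    rw [← h]
    congr 1; funext z
    rw [neg_sq, stdGaussPDF_even]
  have hcdf : stdGaussCDF (0:ℝ) = 1/2 := by
    have h1 := stdGaussCDF_add_Ioi (0:ℝ)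
    have h2 : stdGaussCDF (-(0:ℝ)) = stdGaussCDF 0 := by rw [neg_zero]
    rw [h2] at h1; linarith
  have h0 := setIntegral_Ioi_sq_mul_stdGaussPDF (0:ℝ)
  rw [neg_zero, hcdf, zero_mul, zero_add] at h0
  rw [← hsplit, hsym, h0]; norm_num

lemma abs_softThr_le {α : ℝ} (hα : 0 ≤ α) (z : ℝ) : |softThr z α| ≤ |z| := by
  unfold softThr
  rw [abs_mul]
  rcases le_or_gt (|z| - α) 0 with h | h
  · rw [max_eq_right h, abs_zero, mul_zero]; exact abs_nonneg z
  · rw [max_eq_left h.le, abs_of_pos h]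
    have : |Real.sign z| ≤ 1 := by
      rcases lt_trichotomy z 0 with hz | hz | hz
      · rw [Real.sign_of_neg hz]; norm_num
      · rw [hz, Real.sign_zero]; norm_num
      · rw [Real.sign_of_pos hz]; norm_num
    nlinarith [abs_nonneg (Real.sign z)]

lemma continuous_softThr_sq (α : ℝ) (hα : 0 ≤ α) :
    Continuous (fun z => stdGaussPDF z * softThr z α ^ 2) := by
  have h : (fun z => stdGaussPDF z * softThr z α ^ 2)
      = fun z => stdGaussPDF z * (z - clampTh α z) ^ 2 := by
    funext z; rw [softThr_eq hα]
  rw [h]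
  exact continuous_stdGaussPDF.mul (((continuous_id.sub (continuous_clampTh α)).pow 2))

lemma integrable_pdf_softThr_sq {α : ℝ} (hα : 0 ≤ α) :
    Integrable (fun z => stdGaussPDF z * softThr z α ^ 2) := by
  apply Integrable.mono' integrable_sq_mul_stdGaussPDF
    (continuous_softThr_sq α hα).aestronglyMeasurable
  filter_upwards with z
  rw [Real.norm_eq_abs, abs_of_nonneg (mul_nonneg (stdGaussPDF_nonneg z) (sq_nonneg _))]
  have h1 := abs_softThr_le hα z
  have h2 : softThr z α ^ 2 ≤ z ^ 2 := by
    rw [← sq_abs (softThr z α), ← sq_abs z]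
    exact pow_le_pow_left₀ (abs_nonneg _) h1 2
  have := stdGaussPDF_nonneg z
  nlinarith

lemma J_eq {α : ℝ} (hα : 0 ≤ α) :
    ∫ z, stdGaussPDF z * softThr z α ^ 2
      = 2*(1+α^2) * stdGaussCDF (-α) - 2*α * stdGaussPDF α := by
  set h : ℝ → ℝ := fun z => stdGaussPDF z * softThr z α ^ 2 with hh
  have hint := integrable_pdf_softThr_sq hα
  have hIoi : ∀ z ∈ Ioi α, h z = stdGaussPDF z * (z - α)^2 := by
    intro z hz
    rw [hh]
    simp only
    rw [softThr_eq hα]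
    congr 2
    unfold clampTh
    rw [min_eq_right (le_of_lt hz), max_eq_right (by linarith)]
  have hIic : ∀ z ∈ Iic (-α), h z = stdGaussPDF z * (z + α)^2 := by
    intro z hz
    rw [hh]
    simp only
    rw [softThr_eq hα]
    have hz' : z ≤ -α := hz
    congr 1
    unfold clampTh
    rw [min_eq_left (by linarith), max_eq_left hz']
    ring
  have hmid : ∀ z ∈ Ioc (-α) α, h z = 0 := by
    intro z hz
    rw [hh]
    simp only
    rw [softThr_eq hα]
    unfold clampTh
    rw [min_eq_left hz.2, max_eq_right hz.1.le]
    simp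
  -- split the integral
  have hsplit : ∫ z, h z = (∫ z in Iic (-α), h z) + ∫ z in Ioi (-α), h z := by
    rw [← compl_Iic]
    exact (integral_add_compl measurableSet_Iic hint).symm
  have hsplit2 : ∫ z in Ioi (-α), h z
      = (∫ z in Ioc (-α) α, h z) + ∫ z in Ioi α, h z := by
    rw [← Ioc_union_Ioi_eq_Ioi (by linarith : -α ≤ α)]
    apply setIntegral_union _ measurableSet_Ioi hint.integrableOn hint.integrableOn
    exact Ioc_disjoint_Ioi le_rfl
  have hzero : ∫ z in Ioc (-α) α, h z = 0 := by
    rw [setIntegral_congr_fun measurableSet_Ioc hmid]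
    simp
  have hright : ∫ z in Ioi α, h z = ∫ z in Ioi α, stdGaussPDF z * (z - α)^2 :=
    setIntegral_congr_fun measurableSet_Ioi hIoi
  have hleft : ∫ z in Iic (-α), h z = ∫ z in Ioi α, stdGaussPDF z * (z - α)^2 := by
    have hsym := integral_comp_neg_Iic (-α) (fun z => stdGaussPDF z * (z - α)^2)
    rw [neg_neg] at hsym
    rw [← hsym]
    apply setIntegral_congr_fun measurableSet_Iic
    intro z hz
    rw [hIic z hz]
    simp only [stdGaussPDF_even]
    ring_nf
  have hcore : ∫ z in Ioi α, stdGaussPDF z * (z - α)^2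
      = (1+α^2) * stdGaussCDF (-α) - α * stdGaussPDF α := by
    have he : (fun z => stdGaussPDF z * (z - α)^2)
        = fun z => (z^2 * stdGaussPDF z - (2*α) * (z * stdGaussPDF z)) + α^2 * stdGaussPDF z := by
      funext z; ring
    have i1 : Integrable (fun z => z^2 * stdGaussPDF z) (volume.restrict (Ioi α)) :=
      integrable_sq_mul_stdGaussPDF.integrableOn
    have i2 : Integrable (fun z => 2*α*(z * stdGaussPDF z)) (volume.restrict (Ioi α)) :=
      integrable_id_mul_stdGaussPDF.integrableOn.const_mul _
    have i3 : Integrable (fun z => α^2 * stdGaussPDF z) (volume.restrict (Ioi α)) :=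
      integrable_stdGaussPDF.integrableOn.const_mul _
    have i12 : Integrable (fun z => z^2*stdGaussPDF z - 2*α*(z*stdGaussPDF z))
        (volume.restrict (Ioi α)) := by
      have h := i1.sub i2; simpa [Pi.sub_def] using h
    rw [he, integral_add i12 i3, integral_sub i1 i2, integral_const_mul, integral_const_mul]
    rw [setIntegral_Ioi_sq_mul_stdGaussPDF, setIntegral_Ioi_id_mul_stdGaussPDF,
      setIntegral_Ioi_stdGaussPDF]
    ring
  rw [hsplit, hsplit2, hzero, hright, hleft, hcore]
  ring

lemma inner_bound {α σ : ℝ} (hα : 0 ≤ α) (hσ : 0 < σ) (x : ℝ) :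
    ∫ z, stdGaussPDF z * (σ*z - clampTh (α*σ) (x + σ*z))^2 ≤ (1+α^2)*σ^2 := by
  set θ := α*σ with hθdef
  have hθ : 0 ≤ θ := by positivity
  set c : ℝ → ℝ := fun z => clampTh θ (x + σ*z) with hcdef
  have hc : Continuous c := (continuous_clampTh θ).comp (by continuity)
  have hcb : ∀ z, |c z| ≤ θ := fun z => abs_clampTh_le hθ _
  have i1 : Integrable (fun z => z^2 * stdGaussPDF z) := integrable_sq_mul_stdGaussPDF
  have i2 : Integrable (fun z => stdGaussPDF z * (z * c z)) := by
    apply Integrable.mono' (integrable_id_mul_stdGaussPDF.abs.const_mul θ)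
    · exact (continuous_stdGaussPDF.mul (continuous_id.mul hc)).aestronglyMeasurable
    · filter_upwards with z
      rw [Real.norm_eq_abs, abs_mul, abs_mul,
        abs_of_nonneg (stdGaussPDF_nonneg z), abs_mul]
      have h1 : stdGaussPDF z * (|z| * |c z|) ≤ stdGaussPDF z * (|z| * θ) := by
        apply mul_le_mul_of_nonneg_left _ (stdGaussPDF_nonneg z)
        exact mul_le_mul_of_nonneg_left (hcb z) (abs_nonneg z)
      calc stdGaussPDF z * (|z| * |c z|) ≤ stdGaussPDF z * (|z| * θ) := h1
        _ = θ * (|z| * |stdGaussPDF z|) := by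
            rw [abs_of_nonneg (stdGaussPDF_nonneg z)]; ring
  have i3 : Integrable (fun z => stdGaussPDF z * (c z)^2) := by
    apply Integrable.mono' (integrable_stdGaussPDF.const_mul (θ^2))
    · exact (continuous_stdGaussPDF.mul (hc.pow 2)).aestronglyMeasurable
    · filter_upwards with z
      rw [Real.norm_eq_abs,
        abs_of_nonneg (mul_nonneg (stdGaussPDF_nonneg z) (sq_nonneg _))]
      have h2 : (c z)^2 ≤ θ^2 := by
        rw [← sq_abs (c z)]
        exact pow_le_pow_left₀ (abs_nonneg _) (hcb z) 2
      have := stdGaussPDF_nonneg z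
      nlinarith
  have hexp : (fun z => stdGaussPDF z * (σ*z - c z)^2)
      = fun z => σ^2*(z^2*stdGaussPDF z) - 2*σ*(stdGaussPDF z*(z*c z))
          + stdGaussPDF z*(c z)^2 := by
    funext z; ring
  have i1' : Integrable (fun z => σ^2*(z^2*stdGaussPDF z)) := i1.const_mul _
  have i2' : Integrable (fun z => 2*σ*(stdGaussPDF z*(z*c z))) := i2.const_mul _
  have i12 : Integrable (fun z => σ^2*(z^2*stdGaussPDF z) - 2*σ*(stdGaussPDF z*(z*c z))) := by
    have h := i1'.sub i2'; simpa [Pi.sub_def] using h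
  have hsum : ∫ z, stdGaussPDF z * (σ*z - c z)^2
      = σ^2 * (∫ z, z^2*stdGaussPDF z) - 2*σ*(∫ z, stdGaussPDF z*(z*c z))
        + ∫ z, stdGaussPDF z*(c z)^2 := by
    rw [hexp, integral_add i12 i3, integral_sub i1' i2', integral_const_mul, integral_const_mul]
  -- the cross term is nonnegative
  have hcross : 0 ≤ ∫ z, stdGaussPDF z*(z*c z) := by
    set c0 := clampTh θ x with hc0
    have hdecomp : (fun z => stdGaussPDF z*(z*c z))
        = fun z => stdGaussPDF z*(z*(c z - c0)) + c0 * (z * stdGaussPDF z) := by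
      funext z; ring
    have ia : Integrable (fun z => c0 * (z * stdGaussPDF z)) :=
      integrable_id_mul_stdGaussPDF.const_mul _
    have ib : Integrable (fun z => stdGaussPDF z*(z*(c z - c0))) := by
      have h := i2.sub ia
      refine h.congr (Filter.Eventually.of_forall fun z => ?_)
      simp only [Pi.sub_apply]
      ring
    rw [hdecomp, integral_add ib ia, integral_const_mul, integral_id_mul_stdGaussPDF, mul_zero,
      add_zero]
    apply integral_nonneg
    intro z
    apply mul_nonneg (stdGaussPDF_nonneg z)
    rcases le_or_gt 0 z with hz | hz
    · apply mul_nonneg hz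
      rw [sub_nonneg, hcdef, hc0]
      exact clampTh_mono θ (by nlinarith)
    · have hle : c z - c0 ≤ 0 := by
        rw [sub_nonpos, hcdef, hc0]
        exact clampTh_mono θ (by nlinarith)
      nlinarith
  -- the clamp-squared term is at most θ²
  have hlast : ∫ z, stdGaussPDF z*(c z)^2 ≤ θ^2 := by
    have h := integral_mono i3 (integrable_stdGaussPDF.const_mul (θ^2)) ?_
    · rw [integral_const_mul, integral_stdGaussPDF, mul_one] at h
      exact h
    · intro z
      have h2 : (c z)^2 ≤ θ^2 := by
        rw [← sq_abs (c z)]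
        exact pow_le_pow_left₀ (abs_nonneg _) (hcb z) 2
      have := stdGaussPDF_nonneg z
      simp only
      nlinarith
  rw [hsum, integral_sq_mul_stdGaussPDF]
  have hθ2 : θ^2 = α^2*σ^2 := by rw [hθdef]; ring
  nlinarith [hcross, hlast, sq_nonneg σ, hσ]

/-- Worst-case soft thresholding MSE M(ε,α). -/
noncomputable def Mrisk (ε α : ℝ) : ℝ :=
  ε*(1+α^2) + (1-ε)*(2*(1+α^2) * stdGaussCDF (-α) - 2*α * stdGaussPDF α)

/-- For any ε-sparse prior p₀, E[(η(X₀+σZ;ασ)−X₀)²] ≤ M(ε,α)·σ². -/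
theorem soft_thresholding_minimax_bound (ε α σ : ℝ)
    (hε : ε ∈ Set.Ioo (0:ℝ) 1) (hα : 0 ≤ α) (hσ : 0 < σ)
    (p₀ : Measure ℝ) [IsProbabilityMeasure p₀]
    (hp : ENNReal.ofReal (1 - ε) ≤ p₀ {0}) :
    ∫ x, ∫ z, (softThr (x + σ*z) (α*σ) - x)^2 ∂(gaussianReal 0 1) ∂p₀ ≤
      Mrisk ε α * σ^2 := by
  obtain ⟨hε0, hε1⟩ := hε
  have hθ : 0 ≤ α*σ := by positivity
  -- rewrite the inner integral in pdf form
  have hform : ∀ x z : ℝ, (softThr (x + σ*z) (α*σ) - x)^2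
      = (σ*z - clampTh (α*σ) (x + σ*z))^2 := by
    intro x z
    rw [softThr_eq hθ]
    ring_nf
  have hinner : ∀ x : ℝ, (∫ z, (softThr (x + σ*z) (α*σ) - x)^2 ∂(gaussianReal 0 1))
      = ∫ z, stdGaussPDF z * (σ*z - clampTh (α*σ) (x + σ*z))^2 := by
    intro x
    rw [integral_gaussianReal_eq]
    congr 1; funext z; rw [hform]
  set I : ℝ → ℝ := fun x => ∫ z, stdGaussPDF z * (σ*z - clampTh (α*σ) (x + σ*z))^2
    with hIdef
  set B : ℝ := (1+α^2)*σ^2 with hBdef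
  have hIle : ∀ x, I x ≤ B := fun x => inner_bound hα hσ x
  have hInn : ∀ x, 0 ≤ I x := by
    intro x
    apply integral_nonneg
    intro z
    exact mul_nonneg (stdGaussPDF_nonneg z) (sq_nonneg _)
  set J : ℝ := 2*(1+α^2) * stdGaussCDF (-α) - 2*α * stdGaussPDF α with hJdef
  have hI0 : I 0 = J * σ^2 := by
    have h1 : ∀ z : ℝ, (σ*z - clampTh (α*σ) ((0:ℝ) + σ*z))^2 = σ^2 * softThr z α ^ 2 := by
      intro z
      have h2 : softThr (σ*z) (α*σ) = σ*z - clampTh (α*σ) (σ*z) := softThr_eq hθ _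
      have h3 := softThr_smul hσ hα z
      rw [zero_add, ← h2, h3]
      ring
    rw [hIdef]
    simp only [h1]
    have h4 : (fun z => stdGaussPDF z * (σ^2 * softThr z α ^ 2))
        = fun z => σ^2 * (stdGaussPDF z * softThr z α ^ 2) := by funext z; ring
    rw [h4, integral_const_mul, J_eq hα, hJdef]
    ring
  -- measurability and integrability of I with respect to p₀
  have hImeas : StronglyMeasurable I := by
    have hcont : Continuous (fun p : ℝ × ℝ =>
        stdGaussPDF p.2 * (σ*p.2 - clampTh (α*σ) (p.1 + σ*p.2))^2) := by
      apply (continuous_stdGaussPDF.comp continuous_snd).mul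
      apply Continuous.pow
      apply Continuous.sub (continuous_const.mul continuous_snd)
      exact (continuous_clampTh _).comp (continuous_fst.add (continuous_const.mul continuous_snd))
    exact hcont.stronglyMeasurable.integral_prod_right'
  have hIint : Integrable I p₀ := by
    apply Integrable.mono' (integrable_const B) hImeas.aestronglyMeasurable
    filter_upwards with x
    rw [Real.norm_eq_abs, abs_of_nonneg (hInn x)]
    exact hIle x
  -- split the outer integral
  have hsplit : ∫ x, I x ∂p₀ = (∫ x in ({0}:Set ℝ), I x ∂p₀) + ∫ x in ({0}:Set ℝ)ᶜ, I x ∂p₀ :=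
    (integral_add_compl (measurableSet_singleton 0) hIint).symm
  set m : ℝ := (p₀ {0}).toReal with hm
  have h0 : ∫ x in ({0}:Set ℝ), I x ∂p₀ = m * I 0 := by
    rw [integral_singleton, smul_eq_mul, measureReal_def]
  have hcompl_meas : (p₀ ({0}:Set ℝ)ᶜ).toReal = 1 - m := by
    rw [measure_compl (measurableSet_singleton 0) (measure_ne_top _ _), measure_univ,
      ENNReal.toReal_sub_of_le prob_le_one ENNReal.one_ne_top, ENNReal.toReal_one, hm]
  have hcompl : ∫ x in ({0}:Set ℝ)ᶜ, I x ∂p₀ ≤ B * (1 - m) := by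
    have h := integral_mono (μ := p₀.restrict ({0}:Set ℝ)ᶜ) (hIint.restrict (s := ({0}:Set ℝ)ᶜ)) (integrable_const B) hIle
    rwa [integral_const, measureReal_def, Measure.restrict_apply_univ, hcompl_meas, smul_eq_mul,
      mul_comm] at h
  have hm1 : m ≤ 1 := by
    rw [hm]
    have := ENNReal.toReal_mono ENNReal.one_ne_top (prob_le_one (μ := p₀) (s := {0}))
    simpa using this
  have hm2 : 1 - ε ≤ m := by
    rw [hm]
    have := ENNReal.toReal_mono (measure_ne_top p₀ {0}) hp
    rwa [ENNReal.toReal_ofReal (by linarith)] at this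
  have hJB : J * σ^2 ≤ B := by rw [← hI0]; exact hIle 0
  have hJnn : 0 ≤ J * σ^2 := by rw [← hI0]; exact hInn 0
  have hMr : Mrisk ε α * σ^2 = ε * B + (1-ε) * (J * σ^2) := by
    rw [Mrisk, hBdef, hJdef]; ring
  calc ∫ x, ∫ z, (softThr (x + σ*z) (α*σ) - x)^2 ∂(gaussianReal 0 1) ∂p₀
      = ∫ x, I x ∂p₀ := by
        congr 1; funext x; exact hinner x
    _ = m * I 0 + ∫ x in ({0}:Set ℝ)ᶜ, I x ∂p₀ := by rw [hsplit, h0]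
    _ ≤ m * (J * σ^2) + B * (1 - m) := by
        rw [hI0]
        linarith [hcompl]
    _ ≤ Mrisk ε α * σ^2 := by
        rw [hMr]
        nlinarith [mul_nonneg (by linarith : (0:ℝ) ≤ m - (1-ε)) (by linarith : (0:ℝ) ≤ B - J*σ^2)]
end

section
/- Fix α ≥ 0, σ ≥ 0, δ > 0 and a probability distribution p₀ on ℝ with finite second moment. Define F(τ²) = σ² + (1/δ)·E[(η(X₀ + τZ; ατ) − X₀)²] for X₀ ∼ p₀ and Z ∼ N(0,1) independent. Then τ² ↦ F(τ²) is non-decreasing and concave on (0,∞). -/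
open MeasureTheory ProbabilityTheory

lemma softThr_eq_clamp {θ : ℝ} (hθ : 0 ≤ θ) (y : ℝ) :
    softThr y θ = y - min (max y (-θ)) θ := by
  unfold softThr
  rcases lt_trichotomy y (-θ) with h | h | h
  · have hy : y < 0 := lt_of_lt_of_le h (by linarith)
    have h1 : max y (-θ) = -θ := max_eq_right (le_of_lt h)
    have h2 : min (max y (-θ)) θ = -θ := by rw [h1]; exact min_eq_left (by linarith)
    have h3 : max (|y| - θ) 0 = -y - θ := by
      rw [abs_of_neg hy]; exact max_eq_left (by linarith)
    rw [Real.sign_of_neg hy, h2, h3]; ring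
  · subst h
    rcases eq_or_lt_of_le hθ with h0 | h0
    · simp [← h0]
    · have hy : -θ < 0 := by linarith
      have h1 : max (-θ) (-θ) = -θ := max_self _
      have h2 : min (max (-θ) (-θ)) θ = -θ := by rw [h1]; exact min_eq_left (by linarith)
      have h3 : max (|(-θ)| - θ) 0 = 0 := by
        rw [abs_of_neg hy]; exact max_eq_right (by linarith)
      rw [Real.sign_of_neg hy, h2, h3]; ring
  · rcases le_or_gt y θ with h' | h'
    · have h1 : max y (-θ) = y := max_eq_left (le_of_lt h)
      have h2 : min (max y (-θ)) θ = y := by rw [h1]; exact min_eq_left h'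
      have h3 : max (|y| - θ) 0 = 0 := max_eq_right (by
        rcases abs_cases y with ⟨ha, _⟩ | ⟨ha, _⟩ <;> rw [ha] <;> linarith)
      rw [h2, h3]; ring
    · have hy : 0 < y := lt_of_le_of_lt hθ h'
      have h1 : max y (-θ) = y := max_eq_left (le_of_lt h)
      have h2 : min (max y (-θ)) θ = θ := by rw [h1]; exact min_eq_right (le_of_lt h')
      have h3 : max (|y| - θ) 0 = y - θ := by
        rw [abs_of_pos hy]; exact max_eq_left (by linarith)
      rw [Real.sign_of_pos hy, h2, h3]; ring

lemma softThr_of_gt {θ y : ℝ} (hθ : 0 ≤ θ) (h : θ < y) : softThr y θ = y - θ := by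
  rw [softThr_eq_clamp hθ, max_eq_left (by linarith), min_eq_right (le_of_lt h)]

lemma softThr_of_lt {θ y : ℝ} (hθ : 0 ≤ θ) (h : y < -θ) : softThr y θ = y + θ := by
  rw [softThr_eq_clamp hθ, max_eq_right (le_of_lt h), min_eq_left (by linarith)]; ring

lemma softThr_of_abs_le {θ y : ℝ} (h : |y| ≤ θ) : softThr y θ = 0 := by
  unfold softThr
  rw [max_eq_right (by linarith)]; ring

lemma abs_softThr_le_s11 {θ : ℝ} (hθ : 0 ≤ θ) (y : ℝ) : |softThr y θ| ≤ |y| := by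
  unfold softThr
  rw [abs_mul]
  calc |Real.sign y| * |max (|y| - θ) 0|
      ≤ 1 * |y| := by
        apply mul_le_mul
        · rcases Real.sign_apply_eq y with h | h | h <;> rw [h] <;> norm_num
        · rw [abs_of_nonneg (le_max_right _ _)]
          exact max_le (by linarith [abs_nonneg y]) (abs_nonneg y)
        · exact abs_nonneg _
        · norm_num
    _ = |y| := one_mul _

lemma softThr_lip {θ θ' : ℝ} (hθ : 0 ≤ θ) (hθ' : 0 ≤ θ') (y y' : ℝ) :
    |softThr y θ - softThr y' θ'| ≤ 2 * |y - y'| + |θ - θ'| := by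
  rw [softThr_eq_clamp hθ, softThr_eq_clamp hθ']
  have hmax : |max y (-θ) - max y' (-θ')| ≤ max |y - y'| |θ - θ'| := by
    have h := abs_max_sub_max_le_max y (-θ) y' (-θ')
    rwa [neg_sub_neg, abs_sub_comm θ' θ] at h
  have h1 : |min (max y (-θ)) θ - min (max y' (-θ')) θ'| ≤ max (max |y - y'| |θ - θ'|) |θ - θ'| :=
    le_trans (abs_min_sub_min_le_max _ _ _ _) (max_le_max hmax le_rfl)
  have h2 : max (max |y - y'| |θ - θ'|) |θ - θ'| ≤ |y - y'| + |θ - θ'| := by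
    apply max_le
    · exact max_le (le_add_of_nonneg_right (abs_nonneg _)) (le_add_of_nonneg_left (abs_nonneg _))
    · exact le_add_of_nonneg_left (abs_nonneg _)
  calc |y - min (max y (-θ)) θ - (y' - min (max y' (-θ')) θ')|
      = |(y - y') - (min (max y (-θ)) θ - min (max y' (-θ')) θ')| := by ring_nf
    _ ≤ |y - y'| + |min (max y (-θ)) θ - min (max y' (-θ')) θ'| := abs_sub _ _
    _ ≤ |y - y'| + (|y - y'| + |θ - θ'|) := by linarith [h1.trans h2]
    _ = 2 * |y - y'| + |θ - θ'| := by ring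

lemma continuous_softThr {θ : ℝ} (hθ : 0 ≤ θ) : Continuous fun y => softThr y θ := by
  simp only [softThr_eq_clamp hθ]
  fun_prop

noncomputable def gpdf (t : ℝ) : ℝ := gaussianPDFReal 0 1 t

lemma gpdf_eq (t : ℝ) : gpdf t = (Real.sqrt (2 * Real.pi))⁻¹ * Real.exp (-(t^2)/2) := by
  unfold gpdf gaussianPDFReal
  norm_num

lemma gpdf_nonneg (t : ℝ) : 0 ≤ gpdf t := gaussianPDFReal_nonneg 0 1 t

lemma gpdf_neg (t : ℝ) : gpdf (-t) = gpdf t := by simp [gpdf_eq]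

lemma gpdf_anti {a b : ℝ} (h : |a| ≤ |b|) : gpdf b ≤ gpdf a := by
  rw [gpdf_eq, gpdf_eq]
  have hπ : (0:ℝ) < Real.sqrt (2 * Real.pi) := Real.sqrt_pos.mpr (by positivity)
  have hsq : a^2 ≤ b^2 := by
    have ha := sq_abs a; have hb := sq_abs b
    nlinarith [abs_nonneg a, abs_nonneg b]
  have : Real.exp (-(b^2)/2) ≤ Real.exp (-(a^2)/2) := Real.exp_le_exp.mpr (by linarith)
  exact mul_le_mul_of_nonneg_left this (by positivity)

lemma measurable_gpdf : Measurable gpdf := measurable_gaussianPDFReal 0 1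

lemma integrable_gpdf : Integrable gpdf := integrable_gaussianPDFReal 0 1

lemma integrable_sq_gpdf : Integrable (fun w : ℝ => w^2 * gpdf w) := by
  have h := integrable_rpow_mul_exp_neg_mul_sq (b := (1:ℝ)/2) (by norm_num) (s := (2:ℝ)) (by norm_num)
  have h2 : Integrable (fun w : ℝ => w^2 * Real.exp (-(w^2)/2)) := by
    have heq : ∀ w : ℝ, w ^ ((2:ℕ):ℝ) * Real.exp (-(1/2) * w^2) = w^2 * Real.exp (-(w^2)/2) := by
      intro w
      rw [Real.rpow_natCast]
      ring_nf
    apply h.congr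
    filter_upwards with w
    exact heq w
  have := h2.const_mul (Real.sqrt (2 * Real.pi))⁻¹
  apply this.congr
  filter_upwards with w
  rw [gpdf_eq]; ring

lemma integrable_sq_gpdf_shift (c : ℝ) : Integrable (fun w : ℝ => w^2 * gpdf (w + c)) := by
  have hf : Integrable (fun u : ℝ => 2 * (u^2 * gpdf u) + 2 * c^2 * gpdf u) :=
    (integrable_sq_gpdf.const_mul 2).add (integrable_gpdf.const_mul (2 * c^2))
  have hshift : Integrable (fun w : ℝ => 2 * ((w+c)^2 * gpdf (w+c)) + 2 * c^2 * gpdf (w+c)) :=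
    hf.comp_add_right c
  apply hshift.mono'
  · exact ((measurable_id.pow_const 2).mul (measurable_gpdf.comp (measurable_id.add_const c))).aestronglyMeasurable
  · filter_upwards with w
    rw [Real.norm_eq_abs, abs_of_nonneg (mul_nonneg (sq_nonneg _) (gpdf_nonneg _))]
    have hb : w^2 ≤ 2*(w+c)^2 + 2*c^2 := by nlinarith [sq_nonneg (w + 2*c)]
    have := gpdf_nonneg (w + c)
    nlinarith

noncomputable def Qfun (α μ : ℝ) : ℝ :=
  ∫ w, (if w < μ then w^2 * gpdf (α - w) else w^2 * gpdf (α + w))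

lemma Qfun_integrand_integrable (α μ : ℝ) :
    Integrable (fun w : ℝ => if w < μ then w^2 * gpdf (α - w) else w^2 * gpdf (α + w)) := by
  have h1 : Integrable (fun w : ℝ => w^2 * gpdf (α - w)) := by
    apply (integrable_sq_gpdf_shift (-α)).congr
    filter_upwards with w
    rw [← gpdf_neg (w + -α)]
    congr 2; ring
  have h2 : Integrable (fun w : ℝ => w^2 * gpdf (α + w)) := by
    apply (integrable_sq_gpdf_shift α).congr
    filter_upwards with w
    congr 2; ring
  apply (h1.add h2).mono'
  · apply Measurable.aestronglyMeasurable
    exact Measurable.ite (measurableSet_lt measurable_id measurable_const)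
      ((measurable_id.pow_const 2).mul (measurable_gpdf.comp (measurable_const.sub measurable_id)))
      ((measurable_id.pow_const 2).mul (measurable_gpdf.comp (measurable_const.add measurable_id)))
  · filter_upwards with w
    have g1 := mul_nonneg (sq_nonneg w) (gpdf_nonneg (α - w))
    have g2 := mul_nonneg (sq_nonneg w) (gpdf_nonneg (α + w))
    by_cases h : w < μ <;>
      simp only [h, if_true, if_false, Real.norm_eq_abs, Pi.add_apply] <;>
      rw [abs_of_nonneg (by assumption)] <;> linarith

lemma Qfun_nonneg (α μ : ℝ) : 0 ≤ Qfun α μ := by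
  apply integral_nonneg
  intro w
  by_cases h : w < μ <;> simp only [h, if_true, if_false] <;>
    exact mul_nonneg (sq_nonneg _) (gpdf_nonneg _)

lemma Qfun_mono {α : ℝ} (hα : 0 ≤ α) : MonotoneOn (Qfun α) (Set.Ici 0) := by
  intro μ₁ h₁ μ₂ _ h12
  apply integral_mono (Qfun_integrand_integrable α μ₁) (Qfun_integrand_integrable α μ₂)
  intro w
  by_cases hw1 : w < μ₁
  · have hw2 : w < μ₂ := lt_of_lt_of_le hw1 h12
    simp [hw1, hw2]
  · by_cases hw2 : w < μ₂
    · simp only [hw1, hw2, if_true, if_false]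
      apply mul_le_mul_of_nonneg_left _ (sq_nonneg w)
      apply gpdf_anti
      have hw : 0 ≤ w := le_trans h₁ (not_lt.mp hw1)
      rw [abs_of_nonneg (by linarith : (0:ℝ) ≤ α + w), abs_le]
      constructor <;> linarith
    · simp [hw1, hw2]

lemma Qfun_even (α μ : ℝ) : Qfun α (-μ) = Qfun α μ := by
  have hneg := integral_neg_eq_self
    (fun w : ℝ => if w < -μ then w^2 * gpdf (α - w) else w^2 * gpdf (α + w)) volume
  rw [Qfun, ← hneg]
  apply integral_congr_ae
  have hμ : ∀ᵐ (w : ℝ), w ≠ μ := by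
    rw [ae_iff]
    simpa using measure_singleton μ
  filter_upwards [hμ] with w hw
  rcases lt_or_gt_of_ne hw with h | h
  · have h1 : ¬(-w < -μ) := by simp; linarith
    simp only [h1, if_false, if_pos h]
    rw [neg_pow, show α + -w = α - w by ring]
    simp
  · have h1 : -w < -μ := by linarith
    have h2 : ¬(w < μ) := by linarith
    simp only [h1, if_true, h2, if_false]
    rw [neg_pow, show α - -w = α + w by ring]
    simp

lemma gauss_eq_withDensity : gaussianReal 0 1 = volume.withDensity (gaussianPDF 0 1) :=
  gaussianReal_of_var_ne_zero 0 one_ne_zero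

lemma gaussianPDF_toReal (z : ℝ) : (gaussianPDF 0 1 z).toReal = gpdf z := by
  rw [gaussianPDF_def, ENNReal.toReal_ofReal (gaussianPDFReal_nonneg 0 1 z)]
  rfl

lemma integrable_gauss_iff {g : ℝ → ℝ} (hg : AEStronglyMeasurable g (gaussianReal 0 1)) :
    Integrable g (gaussianReal 0 1) ↔ Integrable (fun z => g z * gpdf z) volume := by
  rw [gauss_eq_withDensity, integrable_withDensity_iff (measurable_gaussianPDF 0 1)
    (Filter.Eventually.of_forall fun z => by rw [gaussianPDF_def]; exact ENNReal.ofReal_lt_top)]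
  constructor <;> intro h <;> apply h.congr <;> filter_upwards with z <;>
    rw [gaussianPDF_toReal]

lemma integral_gauss_eq {g : ℝ → ℝ} :
    ∫ z, g z ∂(gaussianReal 0 1) = ∫ z, g z * gpdf z := by
  rw [gauss_eq_withDensity]
  have : gaussianPDF 0 1 = fun z => ((gpdf z).toNNReal : ENNReal) := by
    funext z
    rw [gaussianPDF_def]
    rfl
  rw [this, integral_withDensity_eq_integral_smul]
  · congr 1
    funext z
    rw [NNReal.smul_def, Real.coe_toNNReal _ (gpdf_nonneg z), smul_eq_mul, mul_comm]
  · exact measurable_gpdf.real_toNNReal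


lemma continuous_softThr' {θ : ℝ} (hθ : 0 ≤ θ) : Continuous fun y => softThr y θ := by
  simp only [softThr_eq_clamp hθ]
  fun_prop

lemma integrable_sq_gauss : Integrable (fun z : ℝ => z^2) (gaussianReal 0 1) := by
  have hm : AEStronglyMeasurable (fun z : ℝ => z^2) (gaussianReal 0 1) :=
    (continuous_pow 2).aestronglyMeasurable
  rw [integrable_gauss_iff hm]
  exact integrable_sq_gpdf

lemma integrable_abs_gauss : Integrable (fun z : ℝ => |z|) (gaussianReal 0 1) := by
  apply ((integrable_const (1:ℝ)).add integrable_sq_gauss).mono'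
    measurable_abs.aestronglyMeasurable
  filter_upwards with z
  rw [Real.norm_eq_abs, abs_abs, Pi.add_apply]
  nlinarith [sq_nonneg (|z| - 1), sq_abs z, abs_nonneg z]

lemma integrable_quad_gauss (a b c : ℝ) :
    Integrable (fun z : ℝ => a + b * |z| + c * z^2) (gaussianReal 0 1) :=
  ((integrable_const a).add (integrable_abs_gauss.const_mul b)).add
    (integrable_sq_gauss.const_mul c)

lemma abs_softThr_sub_le {α x s z : ℝ} (hα : 0 ≤ α) :
    |softThr (x + Real.sqrt s * z) (α * Real.sqrt s) - x| ≤ 2*|x| + Real.sqrt s * |z| := by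
  have hθ : 0 ≤ α * Real.sqrt s := mul_nonneg hα (Real.sqrt_nonneg s)
  calc |softThr (x + Real.sqrt s * z) (α * Real.sqrt s) - x|
      ≤ |softThr (x + Real.sqrt s * z) (α * Real.sqrt s)| + |x| := abs_sub _ _
    _ ≤ |x + Real.sqrt s * z| + |x| := by linarith [abs_softThr_le_s11 hθ (x + Real.sqrt s * z)]
    _ ≤ (|x| + Real.sqrt s * |z|) + |x| := by
        have := abs_add_le x (Real.sqrt s * z)
        rw [abs_mul, abs_of_nonneg (Real.sqrt_nonneg s)] at this
        linarith
    _ = 2*|x| + Real.sqrt s * |z| := by ring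

lemma innerF_le {α x s z : ℝ} (hα : 0 ≤ α) (hs : 0 ≤ s) :
    (softThr (x + Real.sqrt s * z) (α * Real.sqrt s) - x)^2 ≤ 8*x^2 + 2*s*z^2 := by
  have h := abs_softThr_sub_le (x := x) (s := s) (z := z) hα
  have h2 : (softThr (x + Real.sqrt s * z) (α * Real.sqrt s) - x)^2
      ≤ (2*|x| + Real.sqrt s * |z|)^2 := by
    rw [← sq_abs]
    apply pow_le_pow_left₀ (abs_nonneg _) h
  have hss : Real.sqrt s ^ 2 = s := Real.sq_sqrt hs
  nlinarith [sq_nonneg (2*|x| - Real.sqrt s * |z|), sq_abs x, sq_abs z,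
    abs_nonneg x, abs_nonneg z, Real.sqrt_nonneg s]

lemma continuous_innerF (α x s : ℝ) (hα : 0 ≤ α) :
    Continuous (fun z => (softThr (x + Real.sqrt s * z) (α * Real.sqrt s) - x)^2) := by
  have hθ : 0 ≤ α * Real.sqrt s := mul_nonneg hα (Real.sqrt_nonneg s)
  exact (((continuous_softThr' hθ).comp (by fun_prop)).sub continuous_const).pow 2

lemma integrable_innerF {α s : ℝ} (x : ℝ) (hα : 0 ≤ α) (hs : 0 ≤ s) :
    Integrable (fun z => (softThr (x + Real.sqrt s * z) (α * Real.sqrt s) - x)^2)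
      (gaussianReal 0 1) := by
  apply (integrable_quad_gauss (8*x^2) 0 (2*s)).mono'
    (continuous_innerF α x s hα).aestronglyMeasurable
  filter_upwards with z
  rw [Real.norm_eq_abs, abs_of_nonneg (sq_nonneg _)]
  have := innerF_le (x := x) (z := z) hα hs
  linarith

noncomputable def qf (α x s : ℝ) (z : ℝ) : ℝ :=
  if α * Real.sqrt s < x + Real.sqrt s * z then (z - α)^2
  else if x + Real.sqrt s * z < -(α * Real.sqrt s) then (z + α)^2
  else 0

lemma measurable_qf (α x s : ℝ) : Measurable (qf α x s) := by
  unfold qf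
  apply Measurable.ite
  · exact measurableSet_lt measurable_const (by fun_prop)
  · fun_prop
  · apply Measurable.ite
    · exact measurableSet_lt (by fun_prop) measurable_const
    · fun_prop
    · fun_prop

lemma hasDerivAt_innerG {α : ℝ} (hα : 0 ≤ α) (x : ℝ) {s₀ : ℝ} (hs₀ : 0 < s₀) :
    HasDerivAt (fun s => ∫ z, (softThr (x + Real.sqrt s * z) (α * Real.sqrt s) - x)^2
        ∂(gaussianReal 0 1))
      (∫ z, qf α x s₀ z ∂(gaussianReal 0 1)) s₀ := by
  set γ : Measure ℝ := gaussianReal 0 1 with hγ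
  have hsqpos : 0 < Real.sqrt (s₀/2) := Real.sqrt_pos.mpr (by linarith)
  set k : ℝ := (Real.sqrt (s₀/2))⁻¹ with hk
  have hkpos : 0 < k := inv_pos.mpr hsqpos
  set bound : ℝ → ℝ := fun z => (2*k) * ((2*|x| + Real.sqrt (2*s₀) * |z|) * (2*|z| + α)) with hbound
  have hboundnn : ∀ z, 0 ≤ bound z := by
    intro z
    apply mul_nonneg (by linarith)
    apply mul_nonneg
    · positivity
    · positivity
  have hbound_int : Integrable bound γ := by
    apply (integrable_quad_gauss ((2*k)*(2*α*|x|)) ((2*k)*(4*|x| + α * Real.sqrt (2*s₀)))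
      ((2*k)*(2*Real.sqrt (2*s₀)))).congr
    filter_upwards with z
    rw [hbound]
    rw [← sq_abs z]
    ring
  have key := hasDerivAt_integral_of_dominated_loc_of_lip (μ := γ)
    (F := fun s z => (softThr (x + Real.sqrt s * z) (α * Real.sqrt s) - x)^2)
    (F' := qf α x s₀) (x₀ := s₀) (bound := bound)
    (s := Metric.ball s₀ (s₀/2)) (Metric.ball_mem_nhds _ (by linarith))
    (Filter.Eventually.of_forall fun s => (continuous_innerF α x s hα).aestronglyMeasurable)
    (integrable_innerF x hα hs₀.le)
    (measurable_qf α x s₀).aestronglyMeasurable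
    ?_ hbound_int ?_
  · exact key.2
  · -- Lipschitz
    filter_upwards with z
    apply LipschitzOnWith.of_dist_le_mul
    intro s hs s' hs'
    rw [Metric.mem_ball, Real.dist_eq] at hs hs'
    have hs2 : s₀/2 < s := by cases abs_sub_lt_iff.mp hs; linarith
    have hs2' : s₀/2 < s' := by cases abs_sub_lt_iff.mp hs'; linarith
    have hsnn : (0:ℝ) ≤ s := by linarith
    have hsnn' : (0:ℝ) ≤ s' := by linarith
    have hsub : s < 2*s₀ := by cases abs_sub_lt_iff.mp hs; linarith
    have hsub' : s' < 2*s₀ := by cases abs_sub_lt_iff.mp hs'; linarith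
    set A := softThr (x + Real.sqrt s * z) (α * Real.sqrt s) - x with hA
    set B := softThr (x + Real.sqrt s' * z) (α * Real.sqrt s') - x with hB
    rw [Real.dist_eq, Real.dist_eq]
    -- sqrt difference bound
    have hsqs : Real.sqrt s + Real.sqrt s' ≥ 2 * Real.sqrt (s₀/2) := by
      have h1 : Real.sqrt (s₀/2) ≤ Real.sqrt s := Real.sqrt_le_sqrt (by linarith)
      have h2 : Real.sqrt (s₀/2) ≤ Real.sqrt s' := Real.sqrt_le_sqrt (by linarith)
      linarith
    have hprod : |Real.sqrt s - Real.sqrt s'| * (Real.sqrt s + Real.sqrt s') = |s - s'| := by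
      rw [← abs_of_nonneg (by positivity : (0:ℝ) ≤ Real.sqrt s + Real.sqrt s'), ← abs_mul]
      congr 1
      have e1 : Real.sqrt s ^ 2 = s := Real.sq_sqrt hsnn
      have e2 : Real.sqrt s' ^ 2 = s' := Real.sq_sqrt hsnn'
      nlinarith [e1, e2]
    have hsqdiff : |Real.sqrt s - Real.sqrt s'| ≤ k * |s - s'| := by
      rw [hk]
      rw [inv_mul_eq_div, le_div_iff₀ hsqpos]
      calc |Real.sqrt s - Real.sqrt s'| * Real.sqrt (s₀/2)
          ≤ |Real.sqrt s - Real.sqrt s'| * ((Real.sqrt s + Real.sqrt s')/2) := by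
            apply mul_le_mul_of_nonneg_left _ (abs_nonneg _)
            linarith
        _ = |s - s'| / 2 := by
            rw [show |Real.sqrt s - Real.sqrt s'| * ((Real.sqrt s + Real.sqrt s')/2)
              = (|Real.sqrt s - Real.sqrt s'| * (Real.sqrt s + Real.sqrt s'))/2 by ring, hprod]
        _ ≤ |s - s'| := by linarith [abs_nonneg (s - s')]
    -- main Lipschitz estimate
    have hynn : ∀ t : ℝ, 0 ≤ α * Real.sqrt t := fun t => mul_nonneg hα (Real.sqrt_nonneg t)
    have hAB : |A - B| ≤ (2*|z| + α) * (k * |s - s'|) := by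
      have h1 := softThr_lip (hynn s) (hynn s') (x + Real.sqrt s * z) (x + Real.sqrt s' * z)
      have h2 : |(x + Real.sqrt s * z) - (x + Real.sqrt s' * z)|
          = |Real.sqrt s - Real.sqrt s'| * |z| := by
        rw [← abs_mul]; congr 1; ring
      have h3 : |α * Real.sqrt s - α * Real.sqrt s'| = α * |Real.sqrt s - Real.sqrt s'| := by
        rw [show α * Real.sqrt s - α * Real.sqrt s' = α * (Real.sqrt s - Real.sqrt s') by ring,
          abs_mul, abs_of_nonneg hα]
      have h4 : A - B = softThr (x + Real.sqrt s * z) (α * Real.sqrt s)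
          - softThr (x + Real.sqrt s' * z) (α * Real.sqrt s') := by rw [hA, hB]; ring
      rw [h4]
      calc |softThr (x + Real.sqrt s * z) (α * Real.sqrt s)
            - softThr (x + Real.sqrt s' * z) (α * Real.sqrt s')|
          ≤ 2 * (|Real.sqrt s - Real.sqrt s'| * |z|) + α * |Real.sqrt s - Real.sqrt s'| := by
            rw [← h2, ← h3]; exact h1
        _ = (2*|z| + α) * |Real.sqrt s - Real.sqrt s'| := by ring
        _ ≤ (2*|z| + α) * (k * |s - s'|) := by
            apply mul_le_mul_of_nonneg_left hsqdiff (by positivity)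
    have hMA : |A| ≤ 2*|x| + Real.sqrt (2*s₀) * |z| := by
      refine (abs_softThr_sub_le hα).trans ?_
      have : Real.sqrt s ≤ Real.sqrt (2*s₀) := Real.sqrt_le_sqrt (by linarith)
      have := mul_le_mul_of_nonneg_right this (abs_nonneg z)
      linarith
    have hMB : |B| ≤ 2*|x| + Real.sqrt (2*s₀) * |z| := by
      refine (abs_softThr_sub_le hα).trans ?_
      have : Real.sqrt s' ≤ Real.sqrt (2*s₀) := Real.sqrt_le_sqrt (by linarith)
      have := mul_le_mul_of_nonneg_right this (abs_nonneg z)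
      linarith
    have hfact : A^2 - B^2 = (A - B) * (A + B) := by ring
    calc |A^2 - B^2| = |A - B| * |A + B| := by rw [hfact, abs_mul]
      _ ≤ ((2*|z| + α) * (k * |s - s'|)) * (2*(2*|x| + Real.sqrt (2*s₀) * |z|)) := by
          apply mul_le_mul hAB ((abs_add_le A B).trans (by linarith)) (abs_nonneg _) (by positivity)
      _ = bound z * |s - s'| := by rw [hbound]; ring
      _ ≤ ↑(Real.nnabs (bound z)) * |s - s'| := by
          rw [Real.coe_nnabs, abs_of_nonneg (hboundnn z)]
  · -- a.e. differentiability
    have hsqrt0 : 0 < Real.sqrt s₀ := Real.sqrt_pos.mpr hs₀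
    have hnull : ∀ c : ℝ, γ {z : ℝ | x + Real.sqrt s₀ * z = c} = 0 := by
      intro c
      have hsub : {z : ℝ | x + Real.sqrt s₀ * z = c} ⊆ {(c - x)/Real.sqrt s₀} := by
        intro z hz
        simp only [Set.mem_setOf_eq] at hz
        simp only [Set.mem_singleton_iff]
        field_simp
        linarith
      have hvol : (volume : Measure ℝ) {(c - x)/Real.sqrt s₀} = 0 := measure_singleton _
      exact (gaussianReal_absolutelyContinuous 0 one_ne_zero)
        (measure_mono_null hsub hvol)
    have h1 : ∀ᵐ z ∂γ, x + Real.sqrt s₀ * z ≠ α * Real.sqrt s₀ := by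
      rw [ae_iff]; simp only [not_not]; exact hnull _
    have h2 : ∀ᵐ z ∂γ, x + Real.sqrt s₀ * z ≠ -(α * Real.sqrt s₀) := by
      rw [ae_iff]; simp only [not_not]; exact hnull _
    filter_upwards [h1, h2] with z hz1 hz2
    have hev2 : ∀ᶠ s in nhds s₀, 0 < s := eventually_gt_nhds hs₀
    rcases lt_trichotomy (x + Real.sqrt s₀ * z) (α * Real.sqrt s₀) with hlt | heqc | hgt
    · rcases lt_trichotomy (x + Real.sqrt s₀ * z) (-(α * Real.sqrt s₀)) with hlt2 | heqc2 | hgt2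
      · -- lower branch : F s z = s*(z+α)^2
        have hcont : ContinuousAt (fun s : ℝ => -((x + Real.sqrt s * z) + α * Real.sqrt s)) s₀ :=
          by fun_prop
        have hev : ∀ᶠ s in nhds s₀, 0 < -((x + Real.sqrt s * z) + α * Real.sqrt s) :=
          hcont.eventually (eventually_gt_nhds (by simpa using by linarith :
            (0:ℝ) < -((x + Real.sqrt s₀ * z) + α * Real.sqrt s₀)))
        have heqf : (fun s : ℝ => (softThr (x + Real.sqrt s * z) (α * Real.sqrt s) - x)^2)
            =ᶠ[nhds s₀] (fun s => s*(z+α)^2) := by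
          filter_upwards [hev, hev2] with s hs1 hs2
          rw [softThr_of_lt (mul_nonneg hα (Real.sqrt_nonneg s)) (by linarith)]
          rw [show x + Real.sqrt s * z + α * Real.sqrt s - x = Real.sqrt s * (z + α) by ring,
            mul_pow, Real.sq_sqrt hs2.le]
        have hd : HasDerivAt (fun s : ℝ => s*(z+α)^2) ((z+α)^2) s₀ := by
          simpa using (hasDerivAt_id s₀).mul_const ((z+α)^2)
        have hqf : qf α x s₀ z = (z+α)^2 := by
          unfold qf
          rw [if_neg (by linarith), if_pos hlt2]
        rw [hqf]
        exact hd.congr_of_eventuallyEq heqf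
      · exact absurd heqc2 hz2
      · -- middle branch : F s z = x^2
        have hcont1 : ContinuousAt (fun s : ℝ => α * Real.sqrt s - (x + Real.sqrt s * z)) s₀ :=
          by fun_prop
        have hcont2 : ContinuousAt (fun s : ℝ => (x + Real.sqrt s * z) + α * Real.sqrt s) s₀ :=
          by fun_prop
        have hev1 : ∀ᶠ s in nhds s₀, 0 < α * Real.sqrt s - (x + Real.sqrt s * z) :=
          hcont1.eventually (eventually_gt_nhds (by simpa using by linarith :
            (0:ℝ) < α * Real.sqrt s₀ - (x + Real.sqrt s₀ * z)))
        have hev3 : ∀ᶠ s in nhds s₀, 0 < (x + Real.sqrt s * z) + α * Real.sqrt s :=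
          hcont2.eventually (eventually_gt_nhds (by simpa using by linarith :
            (0:ℝ) < (x + Real.sqrt s₀ * z) + α * Real.sqrt s₀))
        have heqf : (fun s : ℝ => (softThr (x + Real.sqrt s * z) (α * Real.sqrt s) - x)^2)
            =ᶠ[nhds s₀] (fun _ => x^2) := by
          filter_upwards [hev1, hev3] with s hs1 hs3
          rw [softThr_of_abs_le (abs_le.mpr ⟨by linarith, by linarith⟩)]
          ring
        have hqf : qf α x s₀ z = 0 := by
          unfold qf
          rw [if_neg (by linarith), if_neg (by linarith)]
        rw [hqf]
        exact (hasDerivAt_const s₀ (x^2)).congr_of_eventuallyEq heqf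
    · exact absurd heqc hz1
    · -- upper branch : F s z = s*(z-α)^2
      have hcont : ContinuousAt (fun s : ℝ => (x + Real.sqrt s * z) - α * Real.sqrt s) s₀ :=
        by fun_prop
      have hev : ∀ᶠ s in nhds s₀, 0 < (x + Real.sqrt s * z) - α * Real.sqrt s :=
        hcont.eventually (eventually_gt_nhds (by simpa using by linarith :
          (0:ℝ) < (x + Real.sqrt s₀ * z) - α * Real.sqrt s₀))
      have heqf : (fun s : ℝ => (softThr (x + Real.sqrt s * z) (α * Real.sqrt s) - x)^2)
          =ᶠ[nhds s₀] (fun s => s*(z-α)^2) := by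
        filter_upwards [hev, hev2] with s hs1 hs2
        rw [softThr_of_gt (mul_nonneg hα (Real.sqrt_nonneg s)) (by linarith)]
        rw [show x + Real.sqrt s * z - α * Real.sqrt s - x = Real.sqrt s * (z - α) by ring,
          mul_pow, Real.sq_sqrt hs2.le]
      have hd : HasDerivAt (fun s : ℝ => s*(z-α)^2) ((z-α)^2) s₀ := by
        simpa using (hasDerivAt_id s₀).mul_const ((z-α)^2)
      have hqf : qf α x s₀ z = (z-α)^2 := by
        unfold qf
        rw [if_pos hgt]
      rw [hqf]
      exact hd.congr_of_eventuallyEq heqf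


lemma integrable_shift_sq_gpdf (c c' : ℝ) :
    Integrable (fun w : ℝ => (w - c)^2 * gpdf (w + c')) := by
  have h := (integrable_sq_gpdf_shift (c + c')).comp_sub_right c
  apply h.congr
  filter_upwards with w
  have he : w - c + (c + c') = w + c' := by ring
  simp only [he]

lemma integrable_ite_sq_gpdf (c c' μ : ℝ) (P : ℝ → Prop) [DecidablePred P]
    (hP : MeasurableSet {w | P w}) :
    Integrable (fun w : ℝ => (if P w then (w - c)^2 else 0) * gpdf (w + c')) := by
  apply (integrable_shift_sq_gpdf c c').mono'
  · apply Measurable.aestronglyMeasurable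
    apply Measurable.mul _ (measurable_gpdf.comp (measurable_id.add_const c'))
    exact Measurable.ite hP (by fun_prop) measurable_const
  · filter_upwards with w
    rw [Real.norm_eq_abs]
    by_cases h : P w
    · rw [if_pos h, abs_of_nonneg (mul_nonneg (sq_nonneg _) (gpdf_nonneg _))]
    · rw [if_neg h, zero_mul, abs_zero]
      exact mul_nonneg (sq_nonneg _) (gpdf_nonneg _)

lemma qf_integral_eq {α x s : ℝ} (hα : 0 ≤ α) (hs : 0 < s) :
    ∫ z, qf α x s z ∂(gaussianReal 0 1) = Qfun α (x / Real.sqrt s) := by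
  have hsq : 0 < Real.sqrt s := Real.sqrt_pos.mpr hs
  set μ : ℝ := x / Real.sqrt s with hμ
  have hxμ : μ * Real.sqrt s = x := div_mul_cancel₀ x hsq.ne'
  have hcond1 : ∀ z : ℝ, (α * Real.sqrt s < x + Real.sqrt s * z) ↔ (α - μ < z) := by
    intro z
    constructor <;> intro h <;> nlinarith [hxμ, hsq]
  have hcond2 : ∀ z : ℝ, (x + Real.sqrt s * z < -(α * Real.sqrt s)) ↔ (z < -α - μ) := by
    intro z
    constructor <;> intro h <;> nlinarith [hxμ, hsq]
  have hq : ∀ z, qf α x s z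
      = (if α - μ < z then (z-α)^2 else 0) + (if z < -α - μ then (z+α)^2 else 0) := by
    intro z
    unfold qf
    by_cases h1 : α * Real.sqrt s < x + Real.sqrt s * z
    · rw [if_pos h1, if_pos ((hcond1 z).mp h1), if_neg (by
        intro h
        have := (hcond1 z).mp h1
        linarith)]
      ring
    · rw [if_neg h1, if_neg (fun h => h1 ((hcond1 z).mpr h))]
      by_cases h2 : x + Real.sqrt s * z < -(α * Real.sqrt s)
      · rw [if_pos h2, if_pos ((hcond2 z).mp h2)]
        ring
      · rw [if_neg h2, if_neg (fun h => h2 ((hcond2 z).mpr h))]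
        ring
  have int1 : Integrable (fun z : ℝ => (if α - μ < z then (z-α)^2 else 0) * gpdf z) := by
    have := integrable_ite_sq_gpdf α 0 μ (fun z => α - μ < z)
      (measurableSet_lt measurable_const measurable_id)
    apply this.congr
    filter_upwards with z
    rw [add_zero]
  have int2 : Integrable (fun z : ℝ => (if z < -α - μ then (z+α)^2 else 0) * gpdf z) := by
    have := integrable_ite_sq_gpdf (-α) 0 μ (fun z => z < -α - μ)
      (measurableSet_lt measurable_id measurable_const)
    apply this.congr
    filter_upwards with z
    rw [add_zero, sub_neg_eq_add]
  have intA : Integrable (fun w : ℝ => (if w < μ then w^2 else 0) * gpdf (α - w)) := by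
    have := integrable_ite_sq_gpdf 0 (-α) μ (fun w => w < μ)
      (measurableSet_lt measurable_id measurable_const)
    apply this.congr
    filter_upwards with w
    rw [sub_zero, ← gpdf_neg (w + -α)]
    congr 2
    ring
  have intB : Integrable (fun w : ℝ => (if μ < w then w^2 else 0) * gpdf (α + w)) := by
    have := integrable_ite_sq_gpdf 0 α μ (fun w => μ < w)
      (measurableSet_lt measurable_const measurable_id)
    apply this.congr
    filter_upwards with w
    rw [sub_zero, add_comm α w]
  -- change of variables for first piece
  have T1 : ∫ z, (if α - μ < z then (z-α)^2 else 0) * gpdf z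
      = ∫ w, (if w < μ then w^2 else 0) * gpdf (α - w) := by
    set f : ℝ → ℝ := fun z => (if α - μ < z then (z-α)^2 else 0) * gpdf z with hf
    have e1 : ∫ w, f (α - w) = ∫ z, f z := by
      have h := integral_sub_right_eq_self (μ := volume) (fun u => f (-u)) α
      simp only [neg_sub] at h
      rw [h, integral_neg_eq_self f volume]
    rw [← e1]
    congr 1
    funext w
    rw [hf]
    simp only
    have hiff : (α - μ < α - w) ↔ (w < μ) := by constructor <;> intro <;> linarith
    by_cases h : w < μ
    · rw [if_pos (hiff.mpr h), if_pos h]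
      congr 1
      ring
    · rw [if_neg (fun hh => h (hiff.mp hh)), if_neg h]
  have T2 : ∫ z, (if z < -α - μ then (z+α)^2 else 0) * gpdf z
      = ∫ w, (if μ < w then w^2 else 0) * gpdf (α + w) := by
    set f : ℝ → ℝ := fun z => (if z < -α - μ then (z+α)^2 else 0) * gpdf z with hf
    have e1 : ∫ w, f (-(w + α)) = ∫ z, f z := by
      have h := integral_add_right_eq_self (μ := volume) (fun u => f (-u)) α
      rw [integral_neg_eq_self f volume] at h
      exact h
    rw [← e1]
    congr 1
    funext w
    rw [hf]
    simp only
    have hiff : (-(w + α) < -α - μ) ↔ (μ < w) := by constructor <;> intro <;> linarith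
    by_cases h : μ < w
    · rw [if_pos (hiff.mpr h), if_pos h, gpdf_neg (w + α),
        show -(w + α) + α = -w by ring, neg_sq, add_comm w α]
    · rw [if_neg (fun hh => h (hiff.mp hh)), if_neg h, zero_mul, zero_mul]
  -- assemble
  rw [integral_gauss_eq]
  calc ∫ z, qf α x s z * gpdf z
      = ∫ z, ((if α - μ < z then (z-α)^2 else 0) * gpdf z
          + (if z < -α - μ then (z+α)^2 else 0) * gpdf z) := by
        congr 1
        funext z
        rw [hq z]
        ring
    _ = (∫ z, (if α - μ < z then (z-α)^2 else 0) * gpdf z)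
        + ∫ z, (if z < -α - μ then (z+α)^2 else 0) * gpdf z := integral_add int1 int2
    _ = (∫ w, (if w < μ then w^2 else 0) * gpdf (α - w))
        + ∫ w, (if μ < w then w^2 else 0) * gpdf (α + w) := by rw [T1, T2]
    _ = ∫ w, ((if w < μ then w^2 else 0) * gpdf (α - w)
        + (if μ < w then w^2 else 0) * gpdf (α + w)) := (integral_add intA intB).symm
    _ = Qfun α μ := by
        apply integral_congr_ae
        have hμae : ∀ᵐ (w : ℝ), w ≠ μ := by
          rw [ae_iff]
          simpa using measure_singleton μ
        filter_upwards [hμae] with w hw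
        rcases lt_or_gt_of_ne hw with h | h
        · have h2 : ¬ μ < w := by linarith
          rw [if_pos h, if_neg h2, if_pos h]
          ring
        · have h2 : ¬ w < μ := by linarith
          rw [if_neg h2, if_pos h, if_neg h2]
          ring


lemma innerG_hasDerivAt_abs {α : ℝ} (hα : 0 ≤ α) (x : ℝ) {s : ℝ} (hs : 0 < s) :
    HasDerivAt (fun s => ∫ z, (softThr (x + Real.sqrt s * z) (α * Real.sqrt s) - x)^2
        ∂(gaussianReal 0 1))
      (Qfun α (|x| / Real.sqrt s)) s := by
  have h := hasDerivAt_innerG hα x hs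
  rw [qf_integral_eq hα hs] at h
  have habs : Qfun α (x / Real.sqrt s) = Qfun α (|x| / Real.sqrt s) := by
    rcases le_or_gt 0 x with hx | hx
    · rw [abs_of_nonneg hx]
    · rw [abs_of_neg hx, neg_div, Qfun_even]
  rwa [habs] at h

lemma innerG_mono_concave {α : ℝ} (hα : 0 ≤ α) (x : ℝ) :
    MonotoneOn (fun s => ∫ z, (softThr (x + Real.sqrt s * z) (α * Real.sqrt s) - x)^2
        ∂(gaussianReal 0 1)) (Set.Ioi 0) ∧
    ConcaveOn ℝ (Set.Ioi 0) (fun s => ∫ z,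
        (softThr (x + Real.sqrt s * z) (α * Real.sqrt s) - x)^2 ∂(gaussianReal 0 1)) := by
  set g : ℝ → ℝ := fun s => ∫ z, (softThr (x + Real.sqrt s * z) (α * Real.sqrt s) - x)^2
      ∂(gaussianReal 0 1) with hg
  have hderiv : ∀ s ∈ Set.Ioi (0:ℝ), HasDerivAt g (Qfun α (|x| / Real.sqrt s)) s :=
    fun s hs => innerG_hasDerivAt_abs hα x hs
  have hcont : ContinuousOn g (Set.Ioi 0) := fun s hs =>
    (hderiv s hs).differentiableAt.continuousAt.continuousWithinAt
  have hdiff : DifferentiableOn ℝ g (interior (Set.Ioi 0)) := by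
    rw [interior_Ioi]
    exact fun s hs => (hderiv s hs).differentiableAt.differentiableWithinAt
  have hderiv_eq : ∀ s ∈ Set.Ioi (0:ℝ), deriv g s = Qfun α (|x| / Real.sqrt s) :=
    fun s hs => (hderiv s hs).deriv
  constructor
  · apply monotoneOn_of_deriv_nonneg (convex_Ioi 0) hcont hdiff
    intro s hs
    rw [interior_Ioi] at hs
    rw [hderiv_eq s hs]
    exact Qfun_nonneg α _
  · apply AntitoneOn.concaveOn_of_deriv (convex_Ioi 0) hcont hdiff
    rw [interior_Ioi]
    intro s₁ hs₁ s₂ hs₂ h12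
    rw [hderiv_eq s₁ hs₁, hderiv_eq s₂ hs₂]
    have h1 : (0:ℝ) < s₁ := hs₁
    have h2 : (0:ℝ) < s₂ := hs₂
    refine Qfun_mono hα (Set.mem_Ici.mpr (div_nonneg (abs_nonneg x) (Real.sqrt_nonneg s₂)))
      (Set.mem_Ici.mpr (div_nonneg (abs_nonneg x) (Real.sqrt_nonneg s₁))) ?_
    have hs1pos : 0 < Real.sqrt s₁ := Real.sqrt_pos.mpr h1
    have hsle : Real.sqrt s₁ ≤ Real.sqrt s₂ := Real.sqrt_le_sqrt h12
    exact div_le_div_of_nonneg_left (abs_nonneg x) hs1pos hsle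


/-- The state evolution map τ² ↦ F(τ²) = σ² + (1/δ)E[(η(X₀+τZ;ατ)−X₀)²] is
non-decreasing and concave on (0,∞). -/
theorem state_evolution_map_monotone_concave (α σ δ : ℝ)
    (hα : 0 ≤ α) (hσ : 0 ≤ σ) (hδ : 0 < δ)
    (p₀ : Measure ℝ) [IsProbabilityMeasure p₀]
    (h2 : Integrable (fun x : ℝ => x^2) p₀) :
    MonotoneOn (fun s : ℝ => σ^2 + (1/δ) *
        ∫ x, ∫ z, (softThr (x + Real.sqrt s * z) (α * Real.sqrt s) - x)^2
          ∂(gaussianReal 0 1) ∂p₀) (Set.Ioi 0) ∧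
    ConcaveOn ℝ (Set.Ioi 0) (fun s : ℝ => σ^2 + (1/δ) *
        ∫ x, ∫ z, (softThr (x + Real.sqrt s * z) (α * Real.sqrt s) - x)^2
          ∂(gaussianReal 0 1) ∂p₀) := by
  have hδ' : 0 ≤ 1/δ := by positivity
  set g : ℝ → ℝ → ℝ := fun s x => ∫ z, (softThr (x + Real.sqrt s * z) (α * Real.sqrt s) - x)^2
      ∂(gaussianReal 0 1) with hgdef
  set C2 : ℝ := ∫ z, z^2 ∂(gaussianReal 0 1) with hC2
  have hC2nn : 0 ≤ C2 := integral_nonneg fun z => sq_nonneg z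
  -- measurability in x
  have hmeas : ∀ s : ℝ, AEStronglyMeasurable (fun x => g s x) p₀ := by
    intro s
    have hθ : 0 ≤ α * Real.sqrt s := mul_nonneg hα (Real.sqrt_nonneg s)
    have hc : Continuous (fun p : ℝ × ℝ =>
        (softThr (p.1 + Real.sqrt s * p.2) (α * Real.sqrt s) - p.1)^2) := by
      simp only [softThr_eq_clamp hθ]
      fun_prop
    exact (hc.stronglyMeasurable.integral_prod_right').aestronglyMeasurable
  -- nonnegativity and bound
  have hgnn : ∀ s x, 0 ≤ g s x := fun s x => integral_nonneg fun z => sq_nonneg _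
  have hgle : ∀ s, 0 < s → ∀ x, g s x ≤ 8*x^2 + 2*s*C2 := by
    intro s hs x
    have hint2 : Integrable (fun z : ℝ => 8*x^2 + (2*s)*z^2) (gaussianReal 0 1) :=
      (integrable_const _).add (integrable_sq_gauss.const_mul (2*s))
    have hb := integral_mono (integrable_innerF x hα hs.le) hint2
      (fun z => by simpa [mul_assoc] using innerF_le (x := x) (s := s) (z := z) hα hs.le)
    rw [integral_add (integrable_const _) (integrable_sq_gauss.const_mul (2*s)),
      integral_const, integral_const_mul] at hb
    simpa [mul_assoc] using hb
  have hint : ∀ s, 0 < s → Integrable (fun x => g s x) p₀ := by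
    intro s hs
    apply ((h2.const_mul 8).add (integrable_const (2*s*C2))).mono' (hmeas s)
    filter_upwards with x
    rw [Real.norm_eq_abs, abs_of_nonneg (hgnn s x)]
    exact hgle s hs x
  constructor
  · intro s₁ hs₁ s₂ hs₂ h12
    simp only
    have hmono : ∫ x, g s₁ x ∂p₀ ≤ ∫ x, g s₂ x ∂p₀ :=
      integral_mono (hint s₁ hs₁) (hint s₂ hs₂)
        (fun x => (innerG_mono_concave hα x).1 hs₁ hs₂ h12)
    have := mul_le_mul_of_nonneg_left hmono hδ'
    linarith
  · refine ⟨convex_Ioi 0, ?_⟩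
    intro s₁ hs₁ s₂ hs₂ a b ha hb hab
    simp only [smul_eq_mul]
    have hmem : a*s₁ + b*s₂ ∈ Set.Ioi (0:ℝ) := (convex_Ioi 0) hs₁ hs₂ ha hb hab
    have hkey : a * ∫ x, g s₁ x ∂p₀ + b * ∫ x, g s₂ x ∂p₀
        ≤ ∫ x, g (a*s₁ + b*s₂) x ∂p₀ := by
      rw [← integral_const_mul a, ← integral_const_mul b,
        ← integral_add ((hint s₁ hs₁).const_mul a) ((hint s₂ hs₂).const_mul b)]
      apply integral_mono (((hint s₁ hs₁).const_mul a).add ((hint s₂ hs₂).const_mul b))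
        (hint _ hmem)
      intro x
      have := (innerG_mono_concave hα x).2.2 hs₁ hs₂ ha hb hab
      simpa [smul_eq_mul] using this
    have := mul_le_mul_of_nonneg_left hkey hδ'
    have hσ2 : a * σ^2 + b * σ^2 = σ^2 := by rw [← add_mul, hab, one_mul]
    nlinarith
end
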